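/- arXiv:0904.1480 — 2 statements merged into one kernel-verified Lean document; each statement's English description precedes it below -/
import Mathlib

section
/- Let U_n : ℝ → ℝ (n ∈ ℕ) be twice continuously differentiable, strictly concave, strictly increasing functions such that for each x ∈ ℝ the risk aversion r_n(x) := −U_n''(x)/U_n'(x) tends to ∞ as n → ∞, and suppose there exist x₀ ∈ ℝ and α ∈ (0,∞) with U_n'(x₀) → α as n → ∞. Then for every x < x₀ one has U_n'(x) → ∞, and for every x > x₀ one has U_n'(x) → 0, as n → ∞. -/
open Filter MeasureTheory Set

private lemma antitone_deriv_nonpos' {g : ℝ → ℝ} (hg : Antitone g) (x : ℝ)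
    (hd : DifferentiableAt ℝ g x) : deriv g x ≤ 0 := by
  have h := hd.hasDerivAt
  rw [hasDerivAt_iff_tendsto_slope] at h
  have h2 : Tendsto (slope g x) (nhdsWithin x (Ioi x)) (nhds (deriv g x)) :=
    h.mono_left (nhdsWithin_mono x fun y hy => ne_of_gt hy)
  refine le_of_tendsto h2 ?_
  filter_upwards [self_mem_nhdsWithin] with y hy
  rw [slope_def_field]
  exact div_nonpos_of_nonpos_of_nonneg (sub_nonpos.2 (hg hy.le)) (sub_nonneg.2 hy.le)

private lemma fatou_aux' {a b : ℝ} (hab : a < b) (r : ℕ → ℝ → ℝ)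
    (hc : ∀ n, Continuous (r n)) (hnn : ∀ n t, 0 ≤ r n t)
    (htend : ∀ t, Tendsto (fun n => r n t) atTop atTop) :
    Tendsto (fun n => ∫ t in a..b, r n t) atTop atTop := by
  set μ := (volume : Measure ℝ).restrict (Ioc a b)
  set L : ℕ → ENNReal := fun n => ∫⁻ t, ENNReal.ofReal (r n t) ∂μ with hL
  have hmeas : ∀ n, Measurable fun t => ENNReal.ofReal (r n t) :=
    fun n => (ENNReal.measurable_ofReal).comp (hc n).measurable
  have hliminf : ∀ t, Filter.liminf (fun n => ENNReal.ofReal (r n t)) atTop = ⊤ := by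
    intro t
    exact ((ENNReal.tendsto_ofReal_atTop).comp (htend t)).liminf_eq
  have hfat : (⊤ : ENNReal) ≤ Filter.liminf L atTop := by
    have h1 := MeasureTheory.lintegral_liminf_le (μ := μ) (u := atTop) hmeas
    have h2 : ∫⁻ t, Filter.liminf (fun n => ENNReal.ofReal (r n t)) atTop ∂μ = ⊤ := by
      simp only [hliminf]
      rw [lintegral_const, Measure.restrict_apply_univ]
      rw [Real.volume_Ioc]
      exact ENNReal.top_mul (by simp [hab, sub_pos.2 hab])
    rw [← h2]; exact h1
  have hfin : ∀ n, L n ≠ ⊤ := by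
    intro n
    have hint : IntegrableOn (r n) (Ioc a b) := (hc n).integrableOn_Ioc
    have := (hasFiniteIntegral_iff_ofReal (Eventually.of_forall fun t => hnn n t)).mp
      hint.hasFiniteIntegral
    exact this.ne
  have hkey : ∀ n, (∫ t in a..b, r n t) = (L n).toReal := by
    intro n
    rw [intervalIntegral.integral_of_le hab.le,
      integral_eq_lintegral_of_nonneg_ae (Eventually.of_forall fun t => hnn n t)
        ((hc n).aestronglyMeasurable.restrict)]
  rw [tendsto_atTop]
  intro C
  have hlt : ∀ᶠ n in atTop, ENNReal.ofReal (max C 0) < L n := by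
    refine Filter.eventually_lt_of_lt_liminf
      (lt_of_lt_of_le (ENNReal.ofReal_lt_top) hfat) ?_
    exact ⟨0, Eventually.of_forall fun n => zero_le⟩
  filter_upwards [hlt] with n hn
  rw [hkey n]
  calc C ≤ max C 0 := le_max_left _ _
    _ = (ENNReal.ofReal (max C 0)).toReal := by rw [ENNReal.toReal_ofReal (le_max_right _ _)]
    _ ≤ (L n).toReal := ENNReal.toReal_le_toReal (by simp) (hfin n) |>.mpr hn.le

/-- If the risk aversions of `U n` tend to infinity pointwise and `deriv (U n) x₀ → α > 0`,
then `deriv (U n) x → ∞` for `x < x₀` and `deriv (U n) x → 0` for `x > x₀`. -/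
theorem deriv_limits_of_riskAversion_tendsto (U : ℕ → ℝ → ℝ)
    (hC2 : ∀ n, ContDiff ℝ 2 (U n))
    (hconc : ∀ n, StrictConcaveOn ℝ Set.univ (U n))
    (hmono : ∀ n, StrictMono (U n))
    (hra : ∀ x : ℝ,
      Tendsto (fun n => -(deriv (deriv (U n)) x) / deriv (U n) x) atTop atTop)
    (x₀ α : ℝ) (hα : 0 < α)
    (hd : Tendsto (fun n => deriv (U n) x₀) atTop (nhds α)) :
    (∀ x < x₀, Tendsto (fun n => deriv (U n) x) atTop atTop) ∧
    (∀ x > x₀, Tendsto (fun n => deriv (U n) x) atTop (nhds 0)) := by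
  have hdU : ∀ n, Differentiable ℝ (U n) := fun n => (hC2 n).differentiable (by norm_num)
  have hC1f : ∀ n, ContDiff ℝ 1 (deriv (U n)) := by
    intro n
    have := contDiff_succ_iff_deriv (n := 1) (f := U n)
    rw [show ((1:WithTop ℕ∞) + 1) = 2 by norm_num] at this
    exact (this.mp (hC2 n)).2.2
  have hdf : ∀ n, Differentiable ℝ (deriv (U n)) := fun n => (hC1f n).differentiable one_ne_zero
  have hcontf : ∀ n, Continuous (deriv (U n)) := fun n => (hC1f n).continuous
  have hcontf' : ∀ n, Continuous (deriv (deriv (U n))) :=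
    fun n => (hC1f n).continuous_deriv le_rfl
  have hanti : ∀ n, StrictAnti (deriv (U n)) := by
    intro n
    rw [← strictAntiOn_univ]
    exact (hconc n).strictAntiOn_deriv fun x _ => (hdU n).differentiableAt
  have fpos : ∀ n x, 0 < deriv (U n) x := by
    intro n x
    obtain ⟨c, hc, hc2⟩ := exists_deriv_eq_slope (U n) (show x < x + 1 by linarith)
      ((hdU n).continuous.continuousOn) ((hdU n).differentiableOn)
    have hslope : 0 < deriv (U n) c := by
      rw [hc2]
      have := hmono n (show x < x + 1 by linarith)
      have h1 : x + 1 - x = 1 := by ring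
      rw [h1, div_one]
      linarith
    exact lt_trans hslope ((hanti n) hc.1)
  set r : ℕ → ℝ → ℝ := fun n t => -(deriv (deriv (U n)) t) / deriv (U n) t with hr
  have hrnn : ∀ n t, 0 ≤ r n t := by
    intro n t
    have h1 : deriv (deriv (U n)) t ≤ 0 :=
      antitone_deriv_nonpos' (hanti n).antitone t ((hdf n) t)
    exact div_nonneg (neg_nonneg.2 h1) (fpos n t).le
  have hrc : ∀ n, Continuous (r n) :=
    fun n => ((hcontf' n).neg).div (hcontf n) fun t => (fpos n t).ne'
  have hftc : ∀ (n : ℕ) (a b : ℝ),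
      (∫ t in a..b, deriv (deriv (U n)) t / deriv (U n) t)
        = Real.log (deriv (U n) b) - Real.log (deriv (U n) a) := by
    intro n a b
    refine intervalIntegral.integral_eq_sub_of_hasDerivAt
      (f := fun y => Real.log (deriv (U n) y)) (fun t _ => ?_) ?_
    · exact (((hdf n) t).hasDerivAt).log (fpos n t).ne'
    · have hcont : Continuous (fun t => deriv (deriv (U n)) t / deriv (U n) t) :=
        (hcontf' n).div (hcontf n) fun t => (fpos n t).ne'
      exact hcont.intervalIntegrable a b
  have hint_r : ∀ (n : ℕ) (a b : ℝ),
      (∫ t in a..b, r n t)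
        = -(Real.log (deriv (U n) b) - Real.log (deriv (U n) a)) := by
    intro n a b
    rw [← hftc n a b, ← intervalIntegral.integral_neg]
    congr 1
    funext t
    rw [hr]
    ring
  have hloglim : Tendsto (fun n => Real.log (deriv (U n) x₀)) atTop
      (nhds (Real.log α)) := ((Real.continuousAt_log hα.ne').tendsto).comp hd
  constructor
  · intro x hx
    have hI : Tendsto (fun n => ∫ t in x..x₀, r n t) atTop atTop :=
      fatou_aux' hx r hrc hrnn fun t => hra t
    have heq : ∀ n, Real.log (deriv (U n) x)
        = Real.log (deriv (U n) x₀) + ∫ t in x..x₀, r n t := by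
      intro n
      rw [hint_r n x x₀]
      ring
    have hlogx : Tendsto (fun n => Real.log (deriv (U n) x)) atTop atTop := by
      have := hloglim.add_atTop hI
      exact this.congr fun n => (heq n).symm
    have := Real.tendsto_exp_atTop.comp hlogx
    exact this.congr fun n => Real.exp_log (fpos n x)
  · intro x hx
    have hI : Tendsto (fun n => ∫ t in x₀..x, r n t) atTop atTop :=
      fatou_aux' hx r hrc hrnn fun t => hra t
    have heq : ∀ n, Real.log (deriv (U n) x)
        = Real.log (deriv (U n) x₀) + -(∫ t in x₀..x, r n t) := by
      intro n
      rw [hint_r n x₀ x]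
      ring
    have hlogx : Tendsto (fun n => Real.log (deriv (U n) x)) atTop atBot := by
      have := hloglim.add_atBot (tendsto_neg_atTop_atBot.comp hI)
      exact this.congr fun n => (heq n).symm
    have := Real.tendsto_exp_atBot.comp hlogx
    exact this.congr fun n => Real.exp_log (fpos n x)
end

section
/- Let U_n : ℝ → ℝ (n ∈ ℕ) be twice continuously differentiable, strictly concave, strictly increasing functions whose derivatives U_n' are bijections from ℝ onto (0,∞), such that for each x ∈ ℝ the risk aversion r_n(x) := −U_n''(x)/U_n'(x) tends to ∞ as n → ∞, and suppose there exist x₀ ∈ ℝ, α ∈ (0,∞), β ∈ ℝ with U_n'(x₀) → α and U_n(x₀) → β as n → ∞. Then for every K > 1 there exists a constant C such that |V_n(y)| ≤ C for all n ∈ ℕ and all y ∈ [1/K, K], where V_n(y) := sup_{x ∈ ℝ} (U_n(x) − x y). -/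
open Filter

open Filter Set MeasureTheory

lemma my_antitone_deriv_nonpos {g : ℝ → ℝ} (hg : Antitone g) (hd : Differentiable ℝ g) (x : ℝ) :
    deriv g x ≤ 0 := by
  have h := hasDerivAt_iff_tendsto_slope.mp (hd x).hasDerivAt
  refine le_of_tendsto h ?_
  filter_upwards [self_mem_nhdsWithin] with y hy
  rcases lt_or_gt_of_ne (Ne.symm hy) with h1 | h1
  · rw [slope_def_field]
    apply div_nonpos_of_nonpos_of_nonneg
    · have := hg h1.le; linarith
    · linarith
  · rw [slope_def_field]
    apply div_nonpos_of_nonneg_of_nonpos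
    · have := hg h1.le; linarith
    · linarith

lemma my_tangent_le {f : ℝ → ℝ} (hf : ConcaveOn ℝ Set.univ f) (hd : Differentiable ℝ f)
    (a x : ℝ) : f x ≤ f a + deriv f a * (x - a) := by
  rcases lt_trichotomy a x with h | rfl | h
  · have h1 := hf.slope_le_deriv (mem_univ a) (mem_univ x) h (hd a)
    rw [slope_def_field, div_le_iff₀ (by linarith : (0:ℝ) < x - a)] at h1
    linarith
  · simp
  · have h1 := hf.deriv_le_slope (mem_univ x) (mem_univ a) h (hd a)
    rw [slope_def_field, le_div_iff₀ (by linarith : (0:ℝ) < a - x)] at h1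
    have h2 : deriv f a * (x - a) = -(deriv f a * (a - x)) := by ring
    linarith

lemma my_key_bound {f : ℝ → ℝ} (hf : ConcaveOn ℝ Set.univ f) (hd : Differentiable ℝ f)
    {K a b y : ℝ} (hab : a ≤ b) (hfab : f a ≤ f b)
    (hdb0 : 0 ≤ deriv f b) (hdby : deriv f b ≤ y) (hyda : y ≤ deriv f a)
    (hy0 : 0 ≤ y) (hyK : y ≤ K) (x : ℝ) :
    f x - x * y ≤ f b + K * (|a| + |b|) := by
  have hK0 : 0 ≤ K := le_trans hy0 hyK
  have hKab : K * (|a| + |b|) = K * |a| + K * |b| := by ring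
  have hKa : 0 ≤ K * |a| := mul_nonneg hK0 (abs_nonneg a)
  have hKb : 0 ≤ K * |b| := mul_nonneg hK0 (abs_nonneg b)
  rcases le_total x a with hxa | hax
  · have t := my_tangent_le hf hd a x
    have h2 : deriv f a * (x - a) ≤ y * (x - a) :=
      mul_le_mul_of_nonpos_right hyda (by linarith)
    have hex : y * (x - a) = x * y - a * y := by ring
    have h3 : -(K * |a|) ≤ a * y := by
      nlinarith [mul_le_mul_of_nonneg_right (neg_abs_le a) hy0,
        mul_le_mul_of_nonneg_left hyK (abs_nonneg a)]
    linarith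
  rcases le_total b x with hbx | hxb
  · have t := my_tangent_le hf hd b x
    have h2 : deriv f b * (x - b) ≤ y * (x - b) :=
      mul_le_mul_of_nonneg_right hdby (by linarith)
    have hex : y * (x - b) = x * y - b * y := by ring
    have h3 : -(K * |b|) ≤ b * y := by
      nlinarith [mul_le_mul_of_nonneg_right (neg_abs_le b) hy0,
        mul_le_mul_of_nonneg_left hyK (abs_nonneg b)]
    linarith
  · have t := my_tangent_le hf hd b x
    have h2 : deriv f b * (x - b) ≤ 0 := mul_nonpos_of_nonneg_of_nonpos hdb0 (by linarith)
    have hx1 : -(|a| + |b|) ≤ x := by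
      have := neg_abs_le a; have := abs_nonneg b; linarith
    have hxy : -((|a| + |b|) * K) ≤ x * y := by
      nlinarith [mul_le_mul_of_nonneg_right hx1 hy0,
        mul_le_mul_of_nonneg_left hyK (by positivity : (0:ℝ) ≤ |a| + |b|)]
    nlinarith

lemma my_exp_formula {f : ℝ → ℝ} (hd1 : Differentiable ℝ (deriv f))
    (hc2 : Continuous (deriv (deriv f))) (hc1 : Continuous (deriv f))
    (hpos : ∀ x, 0 < deriv f x) (a b : ℝ) :
    deriv f b = deriv f a * Real.exp (∫ x in a..b, deriv (deriv f) x / deriv f x) := by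
  have hder : ∀ x ∈ Set.uIcc a b, HasDerivAt (fun t => Real.log (deriv f t))
      (deriv (deriv f) x / deriv f x) x :=
    fun x _ => ((hd1 x).hasDerivAt).log (ne_of_gt (hpos x))
  have hint : IntervalIntegrable (fun x => deriv (deriv f) x / deriv f x) volume a b :=
    (hc2.div hc1 fun x => ne_of_gt (hpos x)).intervalIntegrable a b
  rw [intervalIntegral.integral_eq_sub_of_hasDerivAt hder hint,
    Real.exp_sub, Real.exp_log (hpos b), Real.exp_log (hpos a)]
  rw [mul_comm, div_mul_cancel₀ _ (ne_of_gt (hpos a))]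

lemma my_integral_tendsto (r : ℕ → ℝ → ℝ) (hcont : ∀ n, Continuous (r n))
    (hnonneg : ∀ n x, 0 ≤ r n x)
    (hra : ∀ x, Tendsto (fun n => r n x) atTop atTop) (a : ℝ) :
    Tendsto (fun n => ∫ x in a..(a+1), r n x) atTop atTop := by
  rw [tendsto_atTop]
  intro M
  set c : ℝ := |M| + 1 with hcdef
  have hc : 0 < c := by positivity
  have hminint : ∀ n, IntervalIntegrable (fun x => min (r n x) c) volume a (a+1) :=
    fun n => ((hcont n).min continuous_const).intervalIntegrable _ _
  have hmin : Tendsto (fun n => ∫ x in a..(a+1), min (r n x) c) atTop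
      (nhds (∫ _x in a..(a+1), c)) := by
    apply intervalIntegral.tendsto_integral_filter_of_dominated_convergence (fun _ => c)
    · exact Eventually.of_forall fun n => ((hcont n).min continuous_const).aestronglyMeasurable
    · refine Eventually.of_forall fun n => (ae_of_all _ fun x _ => ?_)
      rw [Real.norm_eq_abs, abs_of_nonneg (le_min (hnonneg n x) hc.le)]
      exact min_le_right _ _
    · exact intervalIntegrable_const
    · refine ae_of_all _ fun x _ => ?_
      refine Tendsto.congr' ?_ tendsto_const_nhds
      filter_upwards [(hra x).eventually_ge_atTop c] with n hn
      exact (min_eq_right hn).symm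
  rw [intervalIntegral.integral_const] at hmin
  have hsmul : ((a+1) - a) • c = c := by simp
  rw [hsmul] at hmin
  filter_upwards [hmin.eventually (eventually_gt_nhds (by linarith : c - 1 < c))] with n hn
  have hle : (∫ x in a..(a+1), min (r n x) c) ≤ ∫ x in a..(a+1), r n x := by
    apply intervalIntegral.integral_mono_on (by linarith) (hminint n)
      ((hcont n).intervalIntegrable _ _)
    intro x _
    exact min_le_left _ _
  have hM : M ≤ |M| := le_abs_self M
  linarith

/-- Under the assumptions of the risk-averse limit theorem, the Fenchel conjugates
`V n` are uniformly bounded on each compact interval `[1/K, K]` with `K > 1`. -/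
theorem conjugates_uniformly_bounded_on_compacts (U : ℕ → ℝ → ℝ)
    (hC2 : ∀ n, ContDiff ℝ 2 (U n))
    (hconc : ∀ n, StrictConcaveOn ℝ Set.univ (U n))
    (hmono : ∀ n, StrictMono (U n))
    (hbij : ∀ n, Set.BijOn (deriv (U n)) Set.univ (Set.Ioi (0 : ℝ)))
    (hra : ∀ x : ℝ,
      Tendsto (fun n => -(deriv (deriv (U n)) x) / deriv (U n) x) atTop atTop)
    (x₀ α β : ℝ) (hα : 0 < α)
    (hd : Tendsto (fun n => deriv (U n) x₀) atTop (nhds α))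
    (hu : Tendsto (fun n => U n x₀) atTop (nhds β)) :
    ∀ K > (1 : ℝ), ∃ C : ℝ, ∀ n : ℕ, ∀ y ∈ Set.Icc (1 / K) K,
      |⨆ x : ℝ, (U n x - x * y)| ≤ C := by
  intro K hK
  have hK0 : (0:ℝ) < K := by linarith
  have h1K : (0:ℝ) < 1 / K := by positivity
  have h1KK : 1 / K < K := by
    rw [div_lt_iff₀ hK0]; nlinarith
  -- basic regularity facts
  have hdiff : ∀ n, Differentiable ℝ (U n) := fun n => (hC2 n).differentiable two_ne_zero
  have hccon : ∀ n, ConcaveOn ℝ Set.univ (U n) := fun n => (hconc n).concaveOn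
  have hpos : ∀ n x, 0 < deriv (U n) x := fun n x => (hbij n).mapsTo (Set.mem_univ x)
  have hC1d : ∀ n, ContDiff ℝ 1 (deriv (U n)) := by
    intro n
    have h' : ContDiff ℝ ((1:ℕ) + 1) (U n) := by exact_mod_cast hC2 n
    exact (contDiff_succ_iff_deriv.mp h').2.2
  have hd1 : ∀ n, Differentiable ℝ (deriv (U n)) := fun n => (hC1d n).differentiable one_ne_zero
  have hc1 : ∀ n, Continuous (deriv (U n)) := fun n => (hd1 n).continuous
  have hc2 : ∀ n, Continuous (deriv (deriv (U n))) :=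
    fun n => (contDiff_one_iff_deriv.mp (hC1d n)).2
  have hanti : ∀ n, Antitone (deriv (U n)) := fun n =>
    antitoneOn_univ.mp ((hccon n).antitoneOn_deriv fun x _ => hdiff n x)
  have hd2np : ∀ n x, deriv (deriv (U n)) x ≤ 0 :=
    fun n x => my_antitone_deriv_nonpos (hanti n) (hd1 n) x
  have hrnn : ∀ n x, 0 ≤ -(deriv (deriv (U n)) x) / deriv (U n) x :=
    fun n x => div_nonneg (by linarith [hd2np n x]) (hpos n x).le
  have hrcont : ∀ n, Continuous (fun x => -(deriv (deriv (U n)) x) / deriv (U n) x) :=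
    fun n => (hc2 n).neg.div (hc1 n) fun x => ne_of_gt (hpos n x)
  -- integral of risk aversion tends to infinity
  have hIa : ∀ a : ℝ, Tendsto
      (fun n => ∫ x in a..(a+1), -(deriv (deriv (U n)) x) / deriv (U n) x) atTop atTop :=
    fun a => my_integral_tendsto _ hrcont hrnn hra a
  have hflip : ∀ n (a b : ℝ), (∫ x in a..b, deriv (deriv (U n)) x / deriv (U n) x)
      = -∫ x in a..b, -(deriv (deriv (U n)) x) / deriv (U n) x := by
    intro n a b
    rw [← intervalIntegral.integral_neg]
    congr 1
    ext x
    ring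
  have hform : ∀ n (a : ℝ), deriv (U n) (a + 1) = deriv (U n) a *
      Real.exp (-(∫ x in a..(a+1), -(deriv (deriv (U n)) x) / deriv (U n) x)) := by
    intro n a
    rw [my_exp_formula (hd1 n) (hc2 n) (hc1 n) (hpos n) a (a+1), hflip n a (a+1)]
  -- derivative at x₀ + 1 tends to 0
  have h_up0 : Tendsto (fun n => deriv (U n) (x₀ + 1)) atTop (nhds 0) := by
    have h0 : Tendsto (fun n => deriv (U n) x₀ *
        Real.exp (-(∫ x in x₀..(x₀+1), -(deriv (deriv (U n)) x) / deriv (U n) x)))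
        atTop (nhds (α * 0)) :=
      hd.mul (Real.tendsto_exp_atBot.comp (tendsto_neg_atTop_atBot.comp (hIa x₀)))
    rw [mul_zero] at h0
    exact h0.congr fun n => (hform n x₀).symm
  -- derivative at x₀ - 1 tends to infinity
  have h_low : Tendsto (fun n => deriv (U n) (x₀ - 1)) atTop atTop := by
    have heq : ∀ n, deriv (U n) (x₀ - 1) = deriv (U n) x₀ *
        Real.exp (∫ x in (x₀-1)..((x₀-1)+1), -(deriv (deriv (U n)) x) / deriv (U n) x) := by
      intro n
      have h1 := hform n (x₀ - 1)
      have hx : x₀ - 1 + 1 = x₀ := by ring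
      rw [hx] at h1
      rw [hx, h1, mul_assoc, ← Real.exp_add, neg_add_cancel, Real.exp_zero, mul_one]
    have h2 : Tendsto (fun n => deriv (U n) x₀ *
        Real.exp (∫ x in (x₀-1)..((x₀-1)+1), -(deriv (deriv (U n)) x) / deriv (U n) x))
        atTop atTop :=
      Filter.Tendsto.pos_mul_atTop hα hd (Real.tendsto_exp_atTop.comp (hIa (x₀ - 1)))
    have hx : x₀ - 1 + 1 = x₀ := by ring
    rw [hx] at heq h2
    exact h2.congr fun n => (heq n).symm
  -- eventual facts
  have E1 : ∀ᶠ n in atTop, deriv (U n) (x₀ + 1) ≤ 1 / K :=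
    h_up0.eventually (eventually_le_nhds h1K)
  have E2 : ∀ᶠ n in atTop, K ≤ deriv (U n) (x₀ - 1) := h_low.eventually_ge_atTop K
  have E3 : ∀ᶠ n in atTop, U n x₀ ≤ β + 1 := hu.eventually (eventually_le_nhds (lt_add_one β))
  have E4 : ∀ᶠ n in atTop, deriv (U n) x₀ ≤ α + 1 :=
    hd.eventually (eventually_le_nhds (lt_add_one α))
  obtain ⟨N, hN⟩ := eventually_atTop.mp (((E1.and E2).and (E3.and E4)))
  -- lower bound for U n x₀
  obtain ⟨L, hL⟩ := hu.bddBelow_range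
  have hLle : ∀ n, L ≤ U n x₀ := fun n => hL (Set.mem_range_self n)
  -- per-n upper bound
  have hper : ∀ n, ∃ u : ℝ, ∀ y ∈ Set.Icc (1/K) K, ∀ x, U n x - x * y ≤ u := by
    intro n
    obtain ⟨a, -, ha⟩ := (hbij n).surjOn (Set.mem_Ioi.mpr hK0)
    obtain ⟨b, -, hb⟩ := (hbij n).surjOn (Set.mem_Ioi.mpr h1K)
    have hab : a ≤ b := by
      by_contra hcon
      push_neg at hcon
      have := hanti n hcon.le
      rw [ha, hb] at this
      linarith
    refine ⟨U n b + K * (|a| + |b|), fun y hy x => ?_⟩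
    refine my_key_bound (hccon n) (hdiff n) hab ((hmono n).monotone hab) (hpos n b).le
      ?_ ?_ (le_trans h1K.le hy.1) hy.2 x
    · rw [hb]; exact hy.1
    · rw [ha]; exact hy.2
  choose u hu' using hper
  set Bu : ℝ := (β + 1) + (α + 1) + K * (|x₀ - 1| + |x₀ + 1|) with hBu
  set Blow : ℝ := |x₀| * K - L with hBlow
  set c : ℕ → ℝ := fun n => max (if N ≤ n then Bu else u n) Blow with hc
  refine ⟨max (max Bu Blow) 0 + ∑ i ∈ Finset.range N, |c i|, fun n y hy => ?_⟩
  have hy0 : 0 ≤ y := le_trans h1K.le hy.1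
  -- pointwise upper bound
  have hup : ∀ x, U n x - x * y ≤ (if N ≤ n then Bu else u n) := by
    intro x
    by_cases hn : N ≤ n
    · rw [if_pos hn]
      obtain ⟨⟨e1, e2⟩, e3, e4⟩ := hN n hn
      have hb := my_key_bound (hccon n) (hdiff n) (by linarith : x₀ - 1 ≤ x₀ + 1)
        ((hmono n).monotone (by linarith)) (hpos n (x₀+1)).le
        (le_trans e1 hy.1) (le_trans hy.2 e2) hy0 hy.2 x
      have htan := my_tangent_le (hccon n) (hdiff n) x₀ (x₀ + 1)
      have hone : x₀ + 1 - x₀ = 1 := by ring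
      rw [hone, mul_one] at htan
      rw [hBu]
      linarith
    · rw [if_neg hn]
      exact hu' n y hy x
  have hbdd : BddAbove (Set.range fun x => U n x - x * y) := by
    refine ⟨(if N ≤ n then Bu else u n), ?_⟩
    rintro z ⟨x, rfl⟩
    exact hup x
  have hVle : (⨆ x : ℝ, (U n x - x * y)) ≤ (if N ≤ n then Bu else u n) := ciSup_le hup
  have hVge : L - |x₀| * K ≤ ⨆ x : ℝ, (U n x - x * y) := by
    have h1 : U n x₀ - x₀ * y ≤ ⨆ x : ℝ, (U n x - x * y) := le_ciSup hbdd x₀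
    have h3 : x₀ * y ≤ |x₀| * K := by
      nlinarith [mul_le_mul_of_nonneg_right (le_abs_self x₀) hy0,
        mul_le_mul_of_nonneg_left hy.2 (abs_nonneg x₀)]
    have h2 := hLle n
    linarith
  have hsumnn : (0:ℝ) ≤ ∑ i ∈ Finset.range N, |c i| :=
    Finset.sum_nonneg fun i _ => abs_nonneg _
  have hcnC : c n ≤ max (max Bu Blow) 0 + ∑ i ∈ Finset.range N, |c i| := by
    by_cases hn : N ≤ n
    · have : c n = max Bu Blow := by rw [hc]; simp only [if_pos hn]
      rw [this]
      have := le_max_left (max Bu Blow) (0:ℝ)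
      linarith
    · have h1 : c n ≤ |c n| := le_abs_self _
      have h2 : |c n| ≤ ∑ i ∈ Finset.range N, |c i| :=
        Finset.single_le_sum (f := fun i => |c i|) (fun i _ => abs_nonneg _)
          (Finset.mem_range.mpr (lt_of_not_ge hn))
      have := le_max_right (max Bu Blow) (0:ℝ)
      linarith
  rw [abs_le]
  constructor
  · have hBlc : Blow ≤ c n := le_max_right _ _
    have : -Blow ≤ ⨆ x : ℝ, (U n x - x * y) := by rw [hBlow]; linarith
    linarith
  · have hifc : (if N ≤ n then Bu else u n) ≤ c n := le_max_left _ _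
    linarith
end
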